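/- Let K be a finite group with K' ≤ Z(K), let χ : K' → ℂˣ be a homomorphism, and let φ, ψ : K → K' be homomorphisms. Suppose there exist k₀, l₀ ∈ K with χ([k₀,l]ψ(l)) = 1 for all l ∈ K and χ(φ(k)[k,l₀]) = 1 for all k ∈ K. Then the absolute value of (1/|K|²) ∑_{k ∈ K} ∑_{l ∈ K} χ(φ(k)[k,l]ψ(l)) equals [K : Z̄(K/ker χ)]⁻¹, where Z̄(K/H) = {k ∈ K : [k,l] ∈ H for all l ∈ K}. -/

import Mathlib

open scoped commutatorElement

lemma mem_comm' {K : Type*} [Group K] (k l : K) : ⁅k, l⁆ ∈ commutator K :=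
  Subgroup.commutator_mem_commutator (Subgroup.mem_top k) (Subgroup.mem_top l)

lemma comm_mul_left' {K : Type*} [Group K] (hc : commutator K ≤ Subgroup.center K)
    (a b c : K) : ⁅a * b, c⁆ = ⁅a, c⁆ * ⁅b, c⁆ := by
  have hz := Subgroup.mem_center_iff.mp (hc (mem_comm' b c))
  simp only [commutatorElement_def] at hz ⊢
  calc a * b * c * (a * b)⁻¹ * c⁻¹
      = a * (b * c * b⁻¹ * c⁻¹) * (c * a⁻¹ * c⁻¹) := by group
    _ = (b * c * b⁻¹ * c⁻¹) * a * (c * a⁻¹ * c⁻¹) := by rw [hz a]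
    _ = a * c * a⁻¹ * c⁻¹ * (b * c * b⁻¹ * c⁻¹) := by
        rw [hz (a * c * a⁻¹ * c⁻¹)]; group

lemma sum_hom_eq_zero' {K : Type*} [Group K] [Fintype K] (g : K → ℂ)
    (hg : ∀ x y, g (x * y) = g x * g y) (x : K) (hx : g x ≠ 1) :
    ∑ y : K, g y = 0 := by
  have h : ∑ y : K, g y = g x * ∑ y : K, g y := by
    rw [Finset.mul_sum, ← Equiv.sum_comp (Equiv.mulLeft x) g]
    simp [hg]
  have h2 : (1 - g x) * ∑ y : K, g y = 0 := by linear_combination h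
  rcases mul_eq_zero.mp h2 with h3 | h3
  · exact absurd (by linear_combination -h3) hx
  · exact h3

theorem abs_inner_product {K : Type*} [Group K] [Fintype K]
    (hc : commutator K ≤ Subgroup.center K)
    (χ : ↥(commutator K) →* ℂˣ) (φ ψ : K →* ↥(commutator K))
    (k₀ l₀ : K)
    (hk₀ : ∀ l : K, χ (⟨⁅k₀, l⁆, mem_comm' k₀ l⟩ * ψ l) = 1)
    (hl₀ : ∀ k : K, χ (φ k * ⟨⁅k, l₀⁆, mem_comm' k l₀⟩) = 1) :
    ‖(1 / (Fintype.card K : ℂ) ^ 2) *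
        ∑ k : K, ∑ l : K, (χ (φ k * ⟨⁅k, l⁆, mem_comm' k l⟩ * ψ l) : ℂ)‖ =
      (Nat.card {k : K // ∀ l : K, χ ⟨⁅k, l⁆, mem_comm' k l⟩ = 1} : ℝ) /
        (Fintype.card K : ℝ) := by
  classical
  set n := Fintype.card K with hn
  set b : K → K → ℂ := fun k l => (χ ⟨⁅k, l⁆, mem_comm' k l⟩ : ℂ) with hbdef
  -- bilinearity
  have hL : ∀ k k' l : K, b (k * k') l = b k l * b k' l := by
    intro k k' l
    have he : (⟨⁅k * k', l⁆, mem_comm' _ l⟩ : commutator K)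
        = ⟨⁅k, l⁆, mem_comm' k l⟩ * ⟨⁅k', l⁆, mem_comm' k' l⟩ :=
      Subtype.ext (comm_mul_left' hc k k' l)
    simp only [hbdef, he, map_mul, Units.val_mul]
  have hI : ∀ k l : K, b k l * b l k = 1 := by
    intro k l
    have he : (⟨⁅k, l⁆, mem_comm' k l⟩ : commutator K) * ⟨⁅l, k⁆, mem_comm' l k⟩ = 1 := by
      ext; simp only [Subgroup.coe_mul, OneMemClass.coe_one]; group
    have := congrArg (fun u : ℂˣ => (u : ℂ)) (congrArg χ he)
    simpa only [map_mul, map_one, Units.val_mul, Units.val_one] using this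
  have hne : ∀ k l : K, b k l ≠ 0 := fun k l => Units.ne_zero _
  have hR : ∀ k l l' : K, b k (l * l') = b k l * b k l' := by
    intro k l l'
    apply mul_right_cancel₀ (mul_ne_zero (hne l k) (hne l' k))
    calc b k (l * l') * (b l k * b l' k)
        = b k (l * l') * b (l * l') k := by rw [hL]
      _ = 1 := hI _ _
      _ = (b k l * b l k) * (b k l' * b l' k) := by rw [hI, hI]; ring
      _ = b k l * b k l' * (b l k * b l' k) := by ring
  -- hypothesis reformulations
  have hφ : ∀ k : K, (χ (φ k) : ℂ) * b k l₀ = 1 := by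
    intro k
    have := congrArg (fun u : ℂˣ => (u : ℂ)) (hl₀ k)
    simpa only [map_mul, Units.val_mul, Units.val_one] using this
  have hψ : ∀ l : K, b k₀ l * (χ (ψ l) : ℂ) = 1 := by
    intro l
    have := congrArg (fun u : ℂˣ => (u : ℂ)) (hk₀ l)
    simpa only [map_mul, Units.val_mul, Units.val_one] using this
  set f : K → K → ℂ := fun k l => (χ (φ k * ⟨⁅k, l⁆, mem_comm' k l⟩ * ψ l) : ℂ) with hfdef
  have hfexp : ∀ k l : K, f k l = (χ (φ k) : ℂ) * b k l * (χ (ψ l) : ℂ) := by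
    intro k l
    simp only [hfdef, hbdef, map_mul, Units.val_mul]
  -- key identity
  have hkey : ∀ k l : K, f (k * k₀) (l * l₀) * b k₀ l₀ = b k l := by
    intro k l
    have h1 := hφ (k * k₀)
    have h2 := hψ (l * l₀)
    rw [hL] at h1
    rw [hR] at h2
    rw [hfexp]
    rw [hL, hR, hR]
    linear_combination (b k l * b k₀ l * b k₀ l₀ * (χ (ψ (l * l₀)) : ℂ)) * h1
      + b k l * h2
  -- inner sums
  set P : K → Prop := fun k => ∀ l : K, χ ⟨⁅k, l⁆, mem_comm' k l⟩ = 1 with hPdef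
  have hsum : ∀ k : K, ∑ l : K, b k l = if P k then (n : ℂ) else 0 := by
    intro k
    by_cases hk : P k
    · rw [if_pos hk]
      have h1 : ∀ l : K, b k l = 1 := by
        intro l; simp only [hbdef, hk l, Units.val_one]
      simp [h1, hn]
    · rw [if_neg hk]
      simp only [hPdef] at hk
      push_neg at hk
      obtain ⟨l, hl⟩ := hk
      refine sum_hom_eq_zero' (b k) (fun x y => hR k x y) l ?_
      simpa only [hbdef, ne_eq, Units.val_eq_one] using hl
  have hsum2 : ∑ k : K, ∑ l : K, b k l = (n : ℂ) * (Finset.univ.filter P).card := by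
    simp only [hsum]
    rw [Finset.sum_ite, Finset.sum_const, Finset.sum_const_zero, add_zero, nsmul_eq_mul,
      mul_comm]
  -- reindexing
  have hre : ∑ k : K, ∑ l : K, f k l = ∑ k : K, ∑ l : K, f (k * k₀) (l * l₀) := by
    calc ∑ k : K, ∑ l : K, f k l
        = ∑ k : K, ∑ l : K, f k (l * l₀) := by
          refine Finset.sum_congr rfl fun k _ => ?_
          exact (Equiv.sum_comp (Equiv.mulRight l₀) (f k)).symm
      _ = ∑ k : K, ∑ l : K, f (k * k₀) (l * l₀) :=
          (Equiv.sum_comp (Equiv.mulRight k₀) (fun k => ∑ l : K, f k (l * l₀))).symm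
  have hmain : (∑ k : K, ∑ l : K, f k l) * b k₀ l₀ = (n : ℂ) * (Finset.univ.filter P).card := by
    rw [hre, ← hsum2, Finset.sum_mul]
    congr 1; ext k
    rw [Finset.sum_mul]
    congr 1; ext l
    exact hkey k l
  -- abs of b k₀ l₀ is 1
  have habs : ‖b k₀ l₀‖ = 1 := by
    set x : ↥(commutator K) := ⟨⁅k₀, l₀⁆, mem_comm' k₀ l₀⟩ with hx
    have hfin : Finite ↥(commutator K) := Subtype.finite
    have hpow : (b k₀ l₀) ^ (orderOf x) = 1 := by
      rw [hbdef]
      rw [← Units.val_pow_eq_pow_val, ← map_pow, pow_orderOf_eq_one, map_one, Units.val_one]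
    exact Complex.norm_eq_one_of_pow_eq_one hpow (orderOf_pos x).ne'
  -- finish
  have hn0 : (n : ℂ) ≠ 0 := Nat.cast_ne_zero.mpr Fintype.card_ne_zero
  set m : ℕ := (Finset.univ.filter P).card with hm
  have hcard : Nat.card {k : K // ∀ l : K, χ ⟨⁅k, l⁆, mem_comm' k l⟩ = 1} = m := by
    rw [Nat.card_eq_fintype_card, hm]
    exact Fintype.card_subtype _
  rw [hcard]
  calc ‖(1 / (n : ℂ) ^ 2) * ∑ k : K, ∑ l : K, f k l‖
      = ‖(1 / (n : ℂ) ^ 2) * (∑ k : K, ∑ l : K, f k l) * b k₀ l₀‖ := by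
        symm; rw [norm_mul, habs, mul_one]
    _ = ‖(m : ℂ) / n‖ := by
        rw [mul_assoc, hmain]
        congr 1
        field_simp
    _ = (m : ℝ) / n := by
        rw [norm_div, Complex.norm_natCast, Complex.norm_natCast]
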